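/- Let (A, 𝒜, μ) and (B, ℬ, ν) be probability spaces, and let φ : B → ℝ and ψ : A × B → ℝ be bounded measurable functions. On the product probability space (A × B × B, μ ⊗ ν ⊗ ν) define L₁(a,b₁,b₂) := c + φ(b₁)·ψ(a,b₂) and L₂(a,b₁,b₂) := c + φ(b₂)·ψ(a,b₁), where c ∈ ℝ is a constant. If ∫ φ(b₁)·ψ(a,b₂) d(μ⊗ν⊗ν)(a,b₁,b₂) = 0 (so that the common mean of L₁ and L₂ equals c), then Cov(L₁, L₂) := E[L₁·L₂] − E[L₁]·E[L₂] = ∫_A ( ∫_B φ(b)·ψ(a,b) dν(b) )² dμ(a). Moreover, if ∫_B φ dν = 0, then the preceding hypothesis holds automatically and Cov(L₁, L₂) = ∫_A ( ∫_B φ(b)·ψ(a,b) dν(b) − (∫_B φ dν)·(∫_B ψ(a,b) dν(b)) )² dμ(a), i.e., the square of the ν-covariance of φ and ψ(a,·), averaged over a ∼ μ. -/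

import Mathlib

open MeasureTheory

private lemma integrable_of_bdd {X : Type*} [MeasurableSpace X] {μ : Measure X}
    [IsFiniteMeasure μ] {f : X → ℝ} (hf : Measurable f) {C : ℝ} (h : ∀ x, |f x| ≤ C) :
    Integrable f μ :=
  ⟨hf.aestronglyMeasurable, HasFiniteIntegral.of_bounded (C := C)
    (Filter.Eventually.of_forall fun x => by simpa using h x)⟩

theorem factorization_lemma
    {A B : Type*} [MeasurableSpace A] [MeasurableSpace B]
    (μ : Measure A) (ν : Measure B)
    [IsProbabilityMeasure μ] [IsProbabilityMeasure ν]
    (φ : B → ℝ) (ψ : A × B → ℝ) (c : ℝ)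
    (hφ : Measurable φ) (hψ : Measurable ψ)
    (Cφ : ℝ) (hφbd : ∀ b, |φ b| ≤ Cφ)
    (Cψ : ℝ) (hψbd : ∀ p, |ψ p| ≤ Cψ) :
    ((∫ p : A × B × B, φ p.2.1 * ψ (p.1, p.2.2) ∂(μ.prod (ν.prod ν))) = 0 →
      (∫ p : A × B × B,
          (c + φ p.2.1 * ψ (p.1, p.2.2)) * (c + φ p.2.2 * ψ (p.1, p.2.1))
            ∂(μ.prod (ν.prod ν)))
        - (∫ p : A × B × B, (c + φ p.2.1 * ψ (p.1, p.2.2)) ∂(μ.prod (ν.prod ν)))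
          * (∫ p : A × B × B, (c + φ p.2.2 * ψ (p.1, p.2.1)) ∂(μ.prod (ν.prod ν)))
        = ∫ a, (∫ b, φ b * ψ (a, b) ∂ν) ^ 2 ∂μ)
    ∧
    ((∫ b, φ b ∂ν) = 0 →
      (∫ p : A × B × B, φ p.2.1 * ψ (p.1, p.2.2) ∂(μ.prod (ν.prod ν))) = 0 ∧
      (∫ p : A × B × B,
          (c + φ p.2.1 * ψ (p.1, p.2.2)) * (c + φ p.2.2 * ψ (p.1, p.2.1))
            ∂(μ.prod (ν.prod ν)))
        - (∫ p : A × B × B, (c + φ p.2.1 * ψ (p.1, p.2.2)) ∂(μ.prod (ν.prod ν)))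
          * (∫ p : A × B × B, (c + φ p.2.2 * ψ (p.1, p.2.1)) ∂(μ.prod (ν.prod ν)))
        = ∫ a, ((∫ b, φ b * ψ (a, b) ∂ν)
            - (∫ b, φ b ∂ν) * (∫ b, ψ (a, b) ∂ν)) ^ 2 ∂μ) := by
  have mX : Measurable fun p : A × B × B => φ p.2.1 * ψ (p.1, p.2.2) :=
    (hφ.comp measurable_snd.fst).mul (hψ.comp (measurable_fst.prodMk measurable_snd.snd))
  have mY : Measurable fun p : A × B × B => φ p.2.2 * ψ (p.1, p.2.1) :=
    (hφ.comp measurable_snd.snd).mul (hψ.comp (measurable_fst.prodMk measurable_snd.fst))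
  have bX : ∀ p : A × B × B, |φ p.2.1 * ψ (p.1, p.2.2)| ≤ |Cφ| * |Cψ| := fun p => by
    rw [abs_mul]
    exact mul_le_mul ((hφbd _).trans (le_abs_self _)) ((hψbd _).trans (le_abs_self _))
      (abs_nonneg _) (abs_nonneg _)
  have bY : ∀ p : A × B × B, |φ p.2.2 * ψ (p.1, p.2.1)| ≤ |Cφ| * |Cψ| := fun p => by
    rw [abs_mul]
    exact mul_le_mul ((hφbd _).trans (le_abs_self _)) ((hψbd _).trans (le_abs_self _))
      (abs_nonneg _) (abs_nonneg _)
  have iX : Integrable (fun p : A × B × B => φ p.2.1 * ψ (p.1, p.2.2)) (μ.prod (ν.prod ν)) :=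
    integrable_of_bdd mX bX
  have iY : Integrable (fun p : A × B × B => φ p.2.2 * ψ (p.1, p.2.1)) (μ.prod (ν.prod ν)) :=
    integrable_of_bdd mY bY
  have iXY : Integrable (fun p : A × B × B =>
      (φ p.2.1 * ψ (p.1, p.2.2)) * (φ p.2.2 * ψ (p.1, p.2.1))) (μ.prod (ν.prod ν)) := by
    refine integrable_of_bdd (mX.mul mY) (C := (|Cφ| * |Cψ|) * (|Cφ| * |Cψ|)) fun p => ?_
    rw [abs_mul]
    exact mul_le_mul (bX p) (bY p) (abs_nonneg _) ((abs_nonneg _).trans (bX p))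
  -- Fubini computations
  have hXval : (∫ p : A × B × B, φ p.2.1 * ψ (p.1, p.2.2) ∂(μ.prod (ν.prod ν)))
      = ∫ a, (∫ b, φ b ∂ν) * (∫ b, ψ (a, b) ∂ν) ∂μ := by
    rw [integral_prod _ iX]
    refine integral_congr_ae (Filter.Eventually.of_forall fun a => ?_)
    exact integral_prod_mul φ (fun b => ψ (a, b))
  have hYval : (∫ p : A × B × B, φ p.2.2 * ψ (p.1, p.2.1) ∂(μ.prod (ν.prod ν)))
      = ∫ a, (∫ b, φ b ∂ν) * (∫ b, ψ (a, b) ∂ν) ∂μ := by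
    rw [integral_prod _ iY]
    refine integral_congr_ae (Filter.Eventually.of_forall fun a => ?_)
    calc (∫ q : B × B, φ q.2 * ψ (a, q.1) ∂(ν.prod ν))
        = ∫ q : B × B, ψ (a, q.1) * φ q.2 ∂(ν.prod ν) := by
          refine integral_congr_ae (Filter.Eventually.of_forall fun q => ?_); ring
      _ = (∫ b, ψ (a, b) ∂ν) * (∫ b, φ b ∂ν) := integral_prod_mul (fun b => ψ (a, b)) φ
      _ = (∫ b, φ b ∂ν) * (∫ b, ψ (a, b) ∂ν) := mul_comm _ _
  have hXY : (∫ p : A × B × B,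
        (φ p.2.1 * ψ (p.1, p.2.2)) * (φ p.2.2 * ψ (p.1, p.2.1)) ∂(μ.prod (ν.prod ν)))
      = ∫ a, (∫ b, φ b * ψ (a, b) ∂ν) ^ 2 ∂μ := by
    rw [integral_prod _ iXY]
    refine integral_congr_ae (Filter.Eventually.of_forall fun a => ?_)
    calc (∫ q : B × B, (φ q.1 * ψ (a, q.2)) * (φ q.2 * ψ (a, q.1)) ∂(ν.prod ν))
        = ∫ q : B × B, (φ q.1 * ψ (a, q.1)) * (φ q.2 * ψ (a, q.2)) ∂(ν.prod ν) := by
          refine integral_congr_ae (Filter.Eventually.of_forall fun q => ?_); ring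
      _ = (∫ b, φ b * ψ (a, b) ∂ν) * (∫ b, φ b * ψ (a, b) ∂ν) :=
          integral_prod_mul (fun b => φ b * ψ (a, b)) (fun b => φ b * ψ (a, b))
      _ = (∫ b, φ b * ψ (a, b) ∂ν) ^ 2 := (sq _).symm
  -- expansions
  have hL1 : (∫ p : A × B × B, (c + φ p.2.1 * ψ (p.1, p.2.2)) ∂(μ.prod (ν.prod ν)))
      = c + ∫ p : A × B × B, φ p.2.1 * ψ (p.1, p.2.2) ∂(μ.prod (ν.prod ν)) := by
    rw [integral_add (integrable_const c) iX, integral_const]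
    simp
  have hL2 : (∫ p : A × B × B, (c + φ p.2.2 * ψ (p.1, p.2.1)) ∂(μ.prod (ν.prod ν)))
      = c + ∫ p : A × B × B, φ p.2.2 * ψ (p.1, p.2.1) ∂(μ.prod (ν.prod ν)) := by
    rw [integral_add (integrable_const c) iY, integral_const]
    simp
  have hprod : (∫ p : A × B × B,
        (c + φ p.2.1 * ψ (p.1, p.2.2)) * (c + φ p.2.2 * ψ (p.1, p.2.1)) ∂(μ.prod (ν.prod ν)))
      = c * c + c * (∫ p : A × B × B, φ p.2.2 * ψ (p.1, p.2.1) ∂(μ.prod (ν.prod ν)))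
        + c * (∫ p : A × B × B, φ p.2.1 * ψ (p.1, p.2.2) ∂(μ.prod (ν.prod ν)))
        + ∫ p : A × B × B,
            (φ p.2.1 * ψ (p.1, p.2.2)) * (φ p.2.2 * ψ (p.1, p.2.1)) ∂(μ.prod (ν.prod ν)) := by
    have hre : (fun p : A × B × B =>
        (c + φ p.2.1 * ψ (p.1, p.2.2)) * (c + φ p.2.2 * ψ (p.1, p.2.1)))
        = fun p : A × B × B => c * c + (c * (φ p.2.2 * ψ (p.1, p.2.1))
          + (c * (φ p.2.1 * ψ (p.1, p.2.2))
            + (φ p.2.1 * ψ (p.1, p.2.2)) * (φ p.2.2 * ψ (p.1, p.2.1)))) := by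
      funext p; ring
    have ig2 : Integrable (fun p : A × B × B =>
        c * (φ p.2.1 * ψ (p.1, p.2.2))
          + φ p.2.1 * ψ (p.1, p.2.2) * (φ p.2.2 * ψ (p.1, p.2.1))) (μ.prod (ν.prod ν)) :=
      (iX.const_mul c).add iXY
    have ig1 : Integrable (fun p : A × B × B =>
        c * (φ p.2.2 * ψ (p.1, p.2.1)) + (c * (φ p.2.1 * ψ (p.1, p.2.2))
          + φ p.2.1 * ψ (p.1, p.2.2) * (φ p.2.2 * ψ (p.1, p.2.1)))) (μ.prod (ν.prod ν)) :=
      (iY.const_mul c).add ig2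
    rw [hre, integral_add (integrable_const _) ig1,
      integral_add (iY.const_mul c) ig2,
      integral_add (iX.const_mul c) iXY, integral_const]
    simp only [measure_univ, probReal_univ, ENNReal.toReal_one, smul_eq_mul, one_mul, integral_const_mul]
    ring
  have key : (∫ p : A × B × B, φ p.2.1 * ψ (p.1, p.2.2) ∂(μ.prod (ν.prod ν))) = 0 →
      (∫ p : A × B × B,
          (c + φ p.2.1 * ψ (p.1, p.2.2)) * (c + φ p.2.2 * ψ (p.1, p.2.1))
            ∂(μ.prod (ν.prod ν)))
        - (∫ p : A × B × B, (c + φ p.2.1 * ψ (p.1, p.2.2)) ∂(μ.prod (ν.prod ν)))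
          * (∫ p : A × B × B, (c + φ p.2.2 * ψ (p.1, p.2.1)) ∂(μ.prod (ν.prod ν)))
        = ∫ a, (∫ b, φ b * ψ (a, b) ∂ν) ^ 2 ∂μ := by
    intro h0
    have hY0 : (∫ p : A × B × B, φ p.2.2 * ψ (p.1, p.2.1) ∂(μ.prod (ν.prod ν))) = 0 :=
      hYval.trans (hXval ▸ h0)
    rw [hprod, hL1, hL2, h0, hY0, hXY]
    ring
  refine ⟨key, fun hF => ?_⟩
  have h0 : (∫ p : A × B × B, φ p.2.1 * ψ (p.1, p.2.2) ∂(μ.prod (ν.prod ν))) = 0 := by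
    rw [hXval]; simp [hF]
  refine ⟨h0, ?_⟩
  have : (∫ a, ((∫ b, φ b * ψ (a, b) ∂ν)
      - (∫ b, φ b ∂ν) * (∫ b, ψ (a, b) ∂ν)) ^ 2 ∂μ)
      = ∫ a, (∫ b, φ b * ψ (a, b) ∂ν) ^ 2 ∂μ := by
    simp [hF]
  rw [this]
  exact key h0
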